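/- For every real number w with 0 < |w| < 1 and every complex s with Re(s) > 1, the identity (1/Γ(s)) ∫₀^∞ t^{s-1} cos(wt)/(e^t - 1) dt = (1/2) ∑_{n≥1} ( (n+iw)^{-s} + (n-iw)^{-s} ) holds, where the complex powers use the principal branch. -/

import Mathlib

open Complex Polynomial Filter

/-- The Eulerian polynomials, defined by the recurrence
`A 0 = 1`, `A (n+1) = (1 + n*X) * A n + X*(1-X) * (A n)'`. -/
noncomputable def eulerianPoly : ℕ → Polynomial ℤ
  | 0 => 1
  | n + 1 => (1 + Polynomial.C (n : ℤ) * Polynomial.X) * eulerianPoly n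
      + Polynomial.X * (1 - Polynomial.X) * Polynomial.derivative (eulerianPoly n)

/-- The Eulerian numbers `E(n,k)`, coefficients of the Eulerian polynomials. -/
noncomputable def eulerianNum (n k : ℕ) : ℤ := (eulerianPoly n).coeff k

section LCaux
open MeasureTheory Set
open scoped Topology

lemma aux_real_int {a c : ℝ} (ha : 0 < a) (hc : 0 < c) :
    IntegrableOn (fun t : ℝ ↦ t ^ (a - 1) * Real.exp (-(c * t))) (Set.Ioi 0) := by
  have h := Real.GammaIntegral_convergent ha
  rw [← mul_zero c, ← integrableOn_Ioi_comp_mul_left_iff _ _ hc] at h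
  refine IntegrableOn.congr_fun (h.const_mul (c ^ (1 - a)) : IntegrableOn _ _ _) (fun t ht ↦ ?_) measurableSet_Ioi
  rw [mem_Ioi] at ht
  rw [Real.mul_rpow hc.le ht.le]
  rw [show c ^ (1-a) * (Real.exp (-(c*t)) * (c ^ (a-1) * t ^ (a-1)))
      = (c ^ (1-a) * c ^ (a-1)) * (t ^ (a-1) * Real.exp (-(c*t))) by ring,
    ← Real.rpow_add hc]
  norm_num

lemma aux_meas {s z : ℂ} :
    AEStronglyMeasurable (fun t : ℝ ↦ (t:ℂ) ^ (s - 1) * Complex.exp (-z * t))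
      (volume.restrict (Set.Ioi 0)) := by
  refine ContinuousOn.aestronglyMeasurable ?_ measurableSet_Ioi
  refine ContinuousOn.mul ?_ ((Complex.continuous_exp.comp
    ((continuous_const.mul Complex.continuous_ofReal))).continuousOn)
  refine continuousOn_of_forall_continuousAt (fun x hx ↦ ?_)
  exact (continuousAt_cpow_const <| Complex.ofReal_mem_slitPlane.2 hx).comp
    Complex.continuous_ofReal.continuousAt

lemma aux_norm {s z : ℂ} {t : ℝ} (ht : 0 < t) :
    ‖(t:ℂ) ^ (s - 1) * Complex.exp (-z * t)‖ = t ^ (s.re - 1) * Real.exp (-(z.re * t)) := by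
  rw [norm_mul,
    Complex.norm_cpow_eq_rpow_re_of_pos ht, Complex.norm_exp]
  congr 2
  simp

lemma aux_cint {s z : ℂ} (hs : 0 < s.re) (hz : 0 < z.re) :
    IntegrableOn (fun t : ℝ ↦ (t:ℂ) ^ (s - 1) * Complex.exp (-z * t)) (Set.Ioi 0) := by
  refine (aux_real_int hs hz).mono' aux_meas ?_
  filter_upwards [ae_restrict_mem measurableSet_Ioi] with t ht
  rw [aux_norm ht]

lemma aux_deriv {s : ℂ} (hs : 0 < s.re) {z₀ : ℂ} (hz : 0 < z₀.re) :
    HasDerivAt (fun z : ℂ ↦ ∫ t in Set.Ioi (0:ℝ), (t:ℂ) ^ (s - 1) * Complex.exp (-z * t))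
      (∫ t in Set.Ioi (0:ℝ), -(t:ℂ) * ((t:ℂ) ^ (s - 1) * Complex.exp (-z₀ * t))) z₀ := by
  set c : ℝ := z₀.re / 2 with hc
  have hcpos : 0 < c := by positivity
  refine (hasDerivAt_integral_of_dominated_loc_of_deriv_le (s := Metric.ball z₀ c) (x₀ := z₀)
    (F := fun z t ↦ (t:ℂ) ^ (s - 1) * Complex.exp (-z * t)) (Metric.ball_mem_nhds z₀ hcpos)
    (Eventually.of_forall fun x ↦ aux_meas)
    (aux_cint hs hz)
    (F' := fun z t ↦ -(t:ℂ) * ((t:ℂ) ^ (s - 1) * Complex.exp (-z * t)))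
    ((Complex.continuous_ofReal.neg.aestronglyMeasurable.restrict).mul aux_meas)
    (bound := fun t ↦ t ^ (s.re + 1 - 1) * Real.exp (-(c * t))) ?_ (aux_real_int (by positivity) hcpos) ?_).2
  · filter_upwards [ae_restrict_mem measurableSet_Ioi] with t ht x hx
    rw [mem_Ioi] at ht
    rw [norm_mul, aux_norm ht, norm_neg, Complex.norm_real, Real.norm_eq_abs, abs_of_pos ht]
    have h1 : c ≤ x.re := by
      have := (Complex.abs_re_le_norm (x - z₀)).trans_lt (by simpa [Complex.dist_eq] using hx)
      simp only [Complex.sub_re] at this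
      have := abs_lt.mp this
      linarith [this.1]
    calc t * (t ^ (s.re - 1) * Real.exp (-(x.re * t)))
        ≤ t * (t ^ (s.re - 1) * Real.exp (-(c * t))) := by
          gcongr
          all_goals first | positivity | nlinarith
      _ = t ^ (s.re + 1 - 1) * Real.exp (-(c * t)) := by
          rw [show s.re + 1 - 1 = (s.re - 1) + 1 by ring, Real.rpow_add_one ht.ne']
          ring
  · filter_upwards [ae_restrict_mem measurableSet_Ioi] with t ht x hx
    have h : HasDerivAt (fun x : ℂ ↦ -x * (t:ℂ)) (-(t:ℂ)) x := by
      simpa using ((hasDerivAt_id x).neg.mul_const (t:ℂ))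
    have := (h.cexp).const_mul ((t:ℂ) ^ (s - 1))
    exact this.congr_deriv (by ring)

lemma aux_key {s : ℂ} (hs : 0 < s.re) {z : ℂ} (hz : 0 < z.re) :
    ∫ t in Set.Ioi (0:ℝ), (t:ℂ) ^ (s - 1) * Complex.exp (-z * t)
      = Complex.Gamma s * z ^ (-s) := by
  set U : Set ℂ := {z | 0 < z.re} with hUdef
  have hUopen : IsOpen U := isOpen_lt continuous_const Complex.continuous_re
  set f : ℂ → ℂ := fun z ↦ ∫ t in Set.Ioi (0:ℝ), (t:ℂ) ^ (s - 1) * Complex.exp (-z * t) with hfdef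
  set g : ℂ → ℂ := fun z ↦ Complex.Gamma s * z ^ (-s) with hgdef
  have hf : AnalyticOnNhd ℂ f U := by
    refine DifferentiableOn.analyticOnNhd (fun x hx ↦ ?_) hUopen
    exact (aux_deriv hs hx).differentiableAt.differentiableWithinAt
  have hg : AnalyticOnNhd ℂ g U := by
    refine DifferentiableOn.analyticOnNhd (fun x hx ↦ ?_) hUopen
    refine ((differentiableAt_id.cpow (differentiableAt_const _) ?_).const_mul _).differentiableWithinAt
    exact Or.inl hx
  have hreal : ∀ x : ℝ, 0 < x → f x = g x := by
    intro x hx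
    have h := Complex.integral_cpow_mul_exp_neg_mul_Ioi hs hx
    simp only [hfdef, hgdef]
    simp_rw [neg_mul]
    rw [h, one_div, inv_cpow _ _ (by rw [Complex.arg_ofReal_of_nonneg hx.le]; exact Real.pi_ne_zero.symm),
      ← Complex.cpow_neg, mul_comm]
  have htend : Tendsto (fun n : ℕ ↦ ((1 + 1/(n+1) : ℝ) : ℂ)) atTop (𝓝[≠] (1:ℂ)) := by
    refine tendsto_nhdsWithin_of_tendsto_nhds_of_eventually_within _ ?_ ?_
    · have : Tendsto (fun n : ℕ ↦ (1 + 1/(n+1) : ℝ)) atTop (𝓝 1) := by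
        simpa using (tendsto_one_div_add_atTop_nhds_zero_nat (𝕜 := ℝ)).const_add 1
      have := (Complex.continuous_ofReal.tendsto 1).comp this
      simpa [Function.comp_def] using this
    · filter_upwards with n
      simp only [Set.mem_compl_iff, Set.mem_singleton_iff]
      intro h
      have : (1 + 1/(n+1) : ℝ) = 1 := by exact_mod_cast h
      have hn : (0:ℝ) < 1/(n+1) := by positivity
      linarith
  have hfreq : ∃ᶠ z in 𝓝[≠] (1:ℂ), f z = g z :=
    htend.frequently (Frequently.of_forall fun n ↦ hreal _ (by positivity))
  have heq : Set.EqOn f g U :=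
    hf.eqOn_of_preconnected_of_frequently_eq hg
      ((convex_halfSpace_re_gt 0).isPreconnected) (by simp [hUdef]) hfreq
  exact heq hz

end LCaux

open MeasureTheory Set in
theorem LC_cos_integral_eq_series (w : ℝ) (hw0 : 0 < |w|) (hw1 : |w| < 1)
    (s : ℂ) (hs : 1 < s.re) :
    (1 / Complex.Gamma s) *
        ∫ t in Set.Ioi (0 : ℝ), (t : ℂ) ^ (s - 1) * Real.cos (w * t) / (Real.exp t - 1) =
      (1 / 2 : ℂ) *
        ∑' n : ℕ,
          (((n : ℂ) + 1 + Complex.I * w) ^ (-s) + ((n : ℂ) + 1 - Complex.I * w) ^ (-s)) := by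

  have hs0 : 0 < s.re := by linarith
  set z1 : ℕ → ℂ := fun n ↦ (n : ℂ) + 1 + Complex.I * w with hz1
  set z2 : ℕ → ℂ := fun n ↦ (n : ℂ) + 1 - Complex.I * w with hz2
  have hre1 : ∀ n, (z1 n).re = n + 1 := by intro n; simp [hz1]
  have hre2 : ∀ n, (z2 n).re = n + 1 := by intro n; simp [hz2]
  have hpos : ∀ n : ℕ, (0:ℝ) < (n:ℝ) + 1 := fun n ↦ by positivity
  set F : ℕ → ℝ → ℂ := fun n t ↦ (t:ℂ)^(s-1) * Complex.exp (-(z1 n) * t)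
      + (t:ℂ)^(s-1) * Complex.exp (-(z2 n) * t) with hF
  have hint1 : ∀ n, IntegrableOn (fun t : ℝ ↦ (t:ℂ)^(s-1) * Complex.exp (-(z1 n) * t)) (Set.Ioi 0) :=
    fun n ↦ aux_cint hs0 (by rw [hre1]; exact hpos n)
  have hint2 : ∀ n, IntegrableOn (fun t : ℝ ↦ (t:ℂ)^(s-1) * Complex.exp (-(z2 n) * t)) (Set.Ioi 0) :=
    fun n ↦ aux_cint hs0 (by rw [hre2]; exact hpos n)
  have hFint : ∀ n, Integrable (F n) (volume.restrict (Set.Ioi 0)) := fun n ↦ (hint1 n).add (hint2 n)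
  have hFval : ∀ n, ∫ t in Set.Ioi (0:ℝ), F n t
      = Complex.Gamma s * ((z1 n) ^ (-s) + (z2 n) ^ (-s)) := by
    intro n
    rw [show (∫ t in Set.Ioi (0:ℝ), F n t) = (∫ t in Set.Ioi (0:ℝ),
        ((t:ℂ)^(s-1) * Complex.exp (-(z1 n) * t) + (t:ℂ)^(s-1) * Complex.exp (-(z2 n) * t))) from rfl,
      MeasureTheory.integral_add (hint1 n) (hint2 n),
      aux_key hs0 (by rw [hre1]; exact hpos n), aux_key hs0 (by rw [hre2]; exact hpos n), mul_add]
  have hnorm : ∀ n, (∫ t in Set.Ioi (0:ℝ), ‖F n t‖)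
      ≤ 2 * ((1/((n:ℝ)+1)) ^ s.re * Real.Gamma s.re) := by
    intro n
    have hb := (aux_real_int hs0 (hpos n)).add (aux_real_int hs0 (hpos n))
    have h1 : (∫ t in Set.Ioi (0:ℝ), ‖F n t‖) ≤ ∫ t in Set.Ioi (0:ℝ),
        (t ^ (s.re - 1) * Real.exp (-(((n:ℝ)+1) * t)) + t ^ (s.re - 1) * Real.exp (-(((n:ℝ)+1) * t))) := by
      refine MeasureTheory.setIntegral_mono_on ((hFint n).norm) hb measurableSet_Ioi (fun t ht ↦ ?_)
      rw [Set.mem_Ioi] at ht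
      calc ‖F n t‖ ≤ ‖(t:ℂ)^(s-1) * Complex.exp (-(z1 n) * t)‖
            + ‖(t:ℂ)^(s-1) * Complex.exp (-(z2 n) * t)‖ := norm_add_le _ _
        _ = _ := by rw [aux_norm ht, aux_norm ht, hre1, hre2]
    refine h1.trans ?_
    rw [MeasureTheory.integral_add (aux_real_int hs0 (hpos n)) (aux_real_int hs0 (hpos n)),
      Real.integral_rpow_mul_exp_neg_mul_Ioi hs0 (hpos n)]
    linarith
  have hsum : Summable (fun n ↦ ∫ t in Set.Ioi (0:ℝ), ‖F n t‖) := by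
    refine Summable.of_nonneg_of_le
      (fun n ↦ MeasureTheory.integral_nonneg fun t ↦ norm_nonneg _) hnorm ?_
    have h0 : Summable (fun n : ℕ ↦ 1 / ((n:ℝ)+1) ^ s.re) := by
      have h := (Real.summable_one_div_nat_rpow (p := s.re)).mpr hs
      have h2 := (summable_nat_add_iff 1).mpr h
      refine h2.congr fun n ↦ ?_
      push_cast
      ring
    have h2 : Summable (fun n : ℕ ↦ (1 / ((n:ℝ)+1)) ^ s.re) := by
      refine h0.congr fun n ↦ ?_
      rw [one_div, one_div, Real.inv_rpow (by positivity)]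
    exact (h2.mul_right _).mul_left 2
  have H := MeasureTheory.hasSum_integral_of_summable_integral_norm hFint hsum
  have hpt : ∀ t ∈ Set.Ioi (0:ℝ), (∑' n, F n t)
      = 2 * ((t:ℂ)^(s-1) * Real.cos (w*t) / (Real.exp t - 1)) := by
    intro t ht
    rw [Set.mem_Ioi] at ht
    have hr : ‖Complex.exp (-(t:ℂ))‖ < 1 := by
      rw [Complex.norm_exp]
      simp only [Complex.neg_re, Complex.ofReal_re]
      exact Real.exp_lt_one_iff.mpr (by linarith)
    have geo := hasSum_geometric_of_norm_lt_one hr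
    set A : ℂ := (t:ℂ)^(s-1) * (Complex.exp (-(1 + Complex.I*(w:ℂ)) * t)
        + Complex.exp (-(1 - Complex.I*(w:ℂ)) * t)) with hA
    have hterm : ∀ n : ℕ, F n t = A * Complex.exp (-(t:ℂ)) ^ n := by
      intro n
      simp only [hF, hA, hz1, hz2]
      rw [show -((n:ℂ) + 1 + Complex.I*(w:ℂ)) * t = (n:ℂ) * (-(t:ℂ)) + -(1 + Complex.I*(w:ℂ)) * t by ring,
        show -((n:ℂ) + 1 - Complex.I*(w:ℂ)) * t = (n:ℂ) * (-(t:ℂ)) + -(1 - Complex.I*(w:ℂ)) * t by ring,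
        Complex.exp_add, Complex.exp_add, Complex.exp_nat_mul]
      ring
    have hS : HasSum (fun n ↦ F n t) (A * (1 - Complex.exp (-(t:ℂ)))⁻¹) := by
      have := geo.mul_left A
      rwa [show (fun n : ℕ ↦ A * Complex.exp (-(t:ℂ)) ^ n) = fun n ↦ F n t from
        funext fun n ↦ (hterm n).symm] at this
    rw [hS.tsum_eq, hA]
    have key2 : Complex.exp (-(1 + Complex.I*(w:ℂ)) * t) + Complex.exp (-(1 - Complex.I*(w:ℂ)) * t)
        = Complex.exp (-(t:ℂ)) * (2 * Complex.cos ((w:ℂ)*t)) := by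
      rw [show -(1 + Complex.I*(w:ℂ)) * t = -(t:ℂ) + -((w:ℂ)*t) * Complex.I by ring,
        show -(1 - Complex.I*(w:ℂ)) * t = -(t:ℂ) + ((w:ℂ)*t) * Complex.I by ring,
        Complex.exp_add, Complex.exp_add, Complex.two_cos]
      ring
    rw [key2]
    have het : Complex.exp (-(t:ℂ)) = (((Real.exp t : ℝ)) : ℂ)⁻¹ := by
      rw [Complex.exp_neg, ← Complex.ofReal_exp]
    have hexp1 : (((Real.exp t : ℝ)) : ℂ) ≠ 0 := by
      exact_mod_cast (Real.exp_pos t).ne'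
    have hne : (((Real.exp t : ℝ)) : ℂ) - 1 ≠ 0 := by
      intro h
      have h2 : Real.exp t = 1 := by exact_mod_cast sub_eq_zero.mp h
      linarith [Real.add_one_le_exp t]
    have hcos : ((Real.cos (w*t) : ℝ) : ℂ) = Complex.cos ((w:ℂ)*t) := by
      rw [Complex.ofReal_cos]
      push_cast
      rfl
    rw [hcos, het]
    field_simp
  rw [MeasureTheory.setIntegral_congr_fun measurableSet_Ioi hpt] at H
  rw [MeasureTheory.integral_const_mul] at H
  simp only [hFval] at H
  have hG : Complex.Gamma s ≠ 0 := by
    refine Complex.Gamma_ne_zero fun m hm ↦ ?_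
    rw [hm] at hs
    simp only [Complex.neg_re, Complex.natCast_re] at hs
    linarith [Nat.cast_nonneg (α := ℝ) m]
  have H2 := H.div_const (Complex.Gamma s)
  simp only [mul_div_cancel_left₀ _ hG] at H2
  rw [H2.tsum_eq]
  field_simp
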